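/- Let (f, ζ) ∈ 𝕋, i.e., f, ζ ∈ C[0,1], ζ(0)=ζ(1)=0, ζ ≥ 0, f(0)=f(1)=0, and for all 0 ≤ s ≤ s' ≤ 1, ζ(s)=ζ(s')=ζ̌(s,s') implies f(s)=f(s'). For θ ∈ [0,1), define f^[θ](x) = f(θ⊕x) - f(θ) and ζ^(θ)(x) = ζ(θ⊕x) + ζ(θ) - 2ζ̌(θ⊕x, θ), where ⊕ is addition modulo 1. Then (f^[θ], ζ^(θ)) ∈ 𝕋. -/

import Mathlib

open Set
open Topology Filter

/-- Addition modulo 1, for `a = θ + x` with `θ ∈ [0,1)` and `x ∈ [0,1]`. -/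
noncomputable def wrap (a : ℝ) : ℝ := if a < 1 then a else a - 1

/-- `ζ̌(x,y) = min{ζ(u) : u ∈ [x∧y, x∨y]}`. -/
noncomputable def snakeMinOn (ζ : ℝ → ℝ) (x y : ℝ) : ℝ := sInf (ζ '' Set.uIcc x y)

/-- The space `𝕋` of snake tours: `ζ` is a continuous nonnegative excursion on `[0,1]`,
`f` is continuous with `f(0)=f(1)=0`, and `f` satisfies the snake property relative to
`ζ`. -/
def MemSnakeSpace (f ζ : ℝ → ℝ) : Prop :=
  ContinuousOn f (Set.Icc 0 1) ∧ ContinuousOn ζ (Set.Icc 0 1) ∧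
  ζ 0 = 0 ∧ ζ 1 = 0 ∧ (∀ x ∈ Set.Icc (0:ℝ) 1, 0 ≤ ζ x) ∧
  f 0 = 0 ∧ f 1 = 0 ∧
  ∀ s ∈ Set.Icc (0:ℝ) 1, ∀ s' ∈ Set.Icc (0:ℝ) 1,
    ζ s = ζ s' → ζ s = snakeMinOn ζ s s' → f s = f s'

/-- The rerooted label function `f^[θ](x) = f(θ⊕x) - f(θ)`. -/
noncomputable def rerootF (f : ℝ → ℝ) (θ : ℝ) : ℝ → ℝ :=
  fun x => f (wrap (θ + x)) - f θ

/-- The rerooted excursion `ζ^(θ)(x) = ζ(θ⊕x) + ζ(θ) - 2ζ̌(θ⊕x, θ)`. -/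
noncomputable def rerootZ (ζ : ℝ → ℝ) (θ : ℝ) : ℝ → ℝ :=
  fun x => ζ (wrap (θ + x)) + ζ θ - 2 * snakeMinOn ζ (wrap (θ + x)) θ

section aux
variable {ζ : ℝ → ℝ} {θ x y c v : ℝ}

lemma uIcc_subset_unit (hx : x ∈ Icc (0:ℝ) 1) (hy : y ∈ Icc (0:ℝ) 1) :
    uIcc x y ⊆ Icc 0 1 := by
  rw [← uIcc_of_le (zero_le_one (α := ℝ))] at hx hy ⊢
  exact uIcc_subset_uIcc hx hy

lemma img_nonempty : (ζ '' uIcc x y).Nonempty :=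
  ⟨ζ x, mem_image_of_mem _ left_mem_uIcc⟩

lemma img_bddBelow (hζ : ContinuousOn ζ (Icc 0 1)) (hx : x ∈ Icc (0:ℝ) 1)
    (hy : y ∈ Icc (0:ℝ) 1) : BddBelow (ζ '' uIcc x y) :=
  (isCompact_uIcc.image_of_continuousOn (hζ.mono (uIcc_subset_unit hx hy))).bddBelow

lemma snakeMinOn_attained (hζ : ContinuousOn ζ (Icc 0 1)) (hx : x ∈ Icc (0:ℝ) 1)
    (hy : y ∈ Icc (0:ℝ) 1) :
    ∃ u ∈ uIcc x y, ζ u = snakeMinOn ζ x y ∧ ∀ v ∈ uIcc x y, ζ u ≤ ζ v := by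
  obtain ⟨u, hu, hmin⟩ := isCompact_uIcc.exists_isMinOn ⟨x, left_mem_uIcc⟩
    (hζ.mono (uIcc_subset_unit hx hy))
  have hle : ∀ v ∈ uIcc x y, ζ u ≤ ζ v := fun v hv => hmin hv
  refine ⟨u, hu, ?_, hle⟩
  refine (IsLeast.csInf_eq ⟨mem_image_of_mem _ hu, ?_⟩).symm
  rintro _ ⟨v, hv, rfl⟩; exact hle v hv

lemma snakeMinOn_le (hζ : ContinuousOn ζ (Icc 0 1)) (hx : x ∈ Icc (0:ℝ) 1)
    (hy : y ∈ Icc (0:ℝ) 1) (hv : v ∈ uIcc x y) : snakeMinOn ζ x y ≤ ζ v :=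
  csInf_le (img_bddBelow hζ hx hy) (mem_image_of_mem _ hv)

lemma le_minOn (h : ∀ v ∈ uIcc x y, c ≤ ζ v) : c ≤ snakeMinOn ζ x y := by
  refine le_csInf img_nonempty ?_
  rintro _ ⟨v, hv, rfl⟩; exact h v hv

lemma snakeMinOn_self : snakeMinOn ζ x x = ζ x := by
  simp [snakeMinOn, uIcc_self]

lemma snakeMinOn_comm : snakeMinOn ζ x y = snakeMinOn ζ y x := by
  rw [snakeMinOn, snakeMinOn, uIcc_comm]

lemma snakeMinOn_nonneg (h0 : ∀ u ∈ Icc (0:ℝ) 1, 0 ≤ ζ u) (hx : x ∈ Icc (0:ℝ) 1)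
    (hy : y ∈ Icc (0:ℝ) 1) : 0 ≤ snakeMinOn ζ x y :=
  le_minOn fun v hv => h0 v (uIcc_subset_unit hx hy hv)

lemma snakeMinOn_subset (hζ : ContinuousOn ζ (Icc 0 1)) (hx : x ∈ Icc (0:ℝ) 1)
    (hy : y ∈ Icc (0:ℝ) 1) {x' y' : ℝ} (h : uIcc x' y' ⊆ uIcc x y) :
    snakeMinOn ζ x y ≤ snakeMinOn ζ x' y' :=
  csInf_le_csInf (img_bddBelow hζ hx hy) img_nonempty (image_mono h)

lemma snakeMinOn_split {z : ℝ} (hζ : ContinuousOn ζ (Icc 0 1)) (hx : x ∈ Icc (0:ℝ) 1)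
    (hy : y ∈ Icc (0:ℝ) 1) (hz : z ∈ Icc (0:ℝ) 1) (hxy : x ≤ y) (hyz : y ≤ z) :
    snakeMinOn ζ x z = min (snakeMinOn ζ x y) (snakeMinOn ζ y z) := by
  unfold snakeMinOn
  rw [uIcc_of_le (hxy.trans hyz), uIcc_of_le hxy, uIcc_of_le hyz,
    ← Icc_union_Icc_eq_Icc hxy hyz, image_union,
    csInf_union (by rw [← uIcc_of_le hxy]; exact img_bddBelow hζ hx hy)
      (by rw [← uIcc_of_le hxy]; exact img_nonempty)
      (by rw [← uIcc_of_le hyz]; exact img_bddBelow hζ hy hz)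
      (by rw [← uIcc_of_le hyz]; exact img_nonempty)]

lemma snakeMinOn_reflect : snakeMinOn (fun t => ζ (1 - t)) x y = snakeMinOn ζ (1 - x) (1 - y) := by
  unfold snakeMinOn
  rw [← Set.image_image ζ (fun t => (1:ℝ) - t), Set.image_const_sub_uIcc]

end aux

noncomputable def dd (ζ : ℝ → ℝ) (θ t : ℝ) : ℝ := ζ t + ζ θ - 2 * snakeMinOn ζ t θ

section core
variable {ζ : ℝ → ℝ} {θ a b M : ℝ}

/-- first hitting of level `M` from the left -/
lemma hit (hζ : ContinuousOn ζ (Icc 0 1)) (ha : a ∈ Icc (0:ℝ) 1) (hb : b ∈ Icc (0:ℝ) 1)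
    (hab : a ≤ b) (hMa : M ≤ ζ a) (hex : ∃ t ∈ Icc a b, ζ t ≤ M) :
    ∃ t₁ ∈ Icc a b, ζ t₁ = M ∧ ∀ u ∈ Icc a t₁, M ≤ ζ u := by
  set S : Set ℝ := {t ∈ Icc a b | ζ t ≤ M} with hS
  have hSsub : S ⊆ Icc a b := fun t ht => ht.1
  have hSne : S.Nonempty := by obtain ⟨t, ht, hζt⟩ := hex; exact ⟨t, ht, hζt⟩
  have hSbdd : BddBelow S := ⟨a, fun t ht => ht.1.1⟩
  have hIccsub : Icc a b ⊆ Icc (0:ℝ) 1 := Icc_subset_Icc ha.1 hb.2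
  have hSclosed : IsClosed S := by
    have := (hζ.mono hIccsub).preimage_isClosed_of_isClosed isClosed_Icc
      (isClosed_Iic (a := M))
    exact this
  set t₁ := sInf S with ht₁def
  have ht₁S : t₁ ∈ S := hSclosed.csInf_mem hSne hSbdd
  have ht₁ : t₁ ∈ Icc a b := hSsub ht₁S
  have hlt : ∀ u ∈ Ico a t₁, M < ζ u := by
    intro u hu
    by_contra hc
    push_neg at hc
    have huS : u ∈ S := ⟨⟨hu.1, hu.2.le.trans ht₁.2⟩, hc⟩
    exact absurd (csInf_le hSbdd huS) (not_le.2 hu.2)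
  have hζt₁ : ζ t₁ = M := by
    refine le_antisymm ht₁S.2 ?_
    rcases eq_or_lt_of_le ht₁.1 with heq | hlt'
    · rw [← heq]; exact hMa
    · by_contra hc
      push_neg at hc
      have hcw : ContinuousWithinAt ζ (Icc 0 1) t₁ := hζ t₁ (hIccsub ht₁)
      have hev : ∀ᶠ u in 𝓝[Icc 0 1] t₁, ζ u ∈ Iio M :=
        hcw (IsOpen.mem_nhds isOpen_Iio hc)
      have hev' : ∀ᶠ u in 𝓝[Ico a t₁] t₁, ζ u ∈ Iio M :=
        hev.filter_mono (nhdsWithin_mono _ (fun u hu => hIccsub ⟨hu.1, hu.2.le.trans ht₁.2⟩))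
      have : (𝓝[Ico a t₁] t₁).NeBot := right_nhdsWithin_Ico_neBot hlt'
      obtain ⟨u, huM, hu⟩ := (hev'.and (eventually_mem_nhdsWithin)).exists
      exact absurd (hlt u hu) (not_lt.2 huM.le)
  refine ⟨t₁, ht₁, hζt₁, ?_⟩
  intro u hu
  rcases eq_or_lt_of_le hu.2 with heq | hlt'
  · rw [heq, hζt₁]
  · exact (hlt u ⟨hu.1, hlt'⟩).le

lemma key2 (hζ : ContinuousOn ζ (Icc 0 1)) (h0 : ∀ u ∈ Icc (0:ℝ) 1, 0 ≤ ζ u)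
    (h1 : ζ 1 = 0) (hθ : θ ∈ Icc (0:ℝ) 1) (ha : a ∈ Icc (0:ℝ) 1) (hθa : θ ≤ a)
    (hmin : ∀ t ∈ Icc a 1, dd ζ θ a ≤ dd ζ θ t) :
    ζ a = snakeMinOn ζ a θ := by
  set M := snakeMinOn ζ a θ with hM
  have h1mem : (1:ℝ) ∈ Icc (0:ℝ) 1 := ⟨zero_le_one, le_refl 1⟩
  have hMa : M ≤ ζ a := snakeMinOn_le hζ ha hθ left_mem_uIcc
  have hM0 : 0 ≤ M := snakeMinOn_nonneg h0 ha hθ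
  obtain ⟨t₁, ht₁, hζt₁, hge⟩ := hit hζ ha h1mem ha.2 hMa ⟨1, ⟨ha.2, le_refl 1⟩, by rw [h1]; exact hM0⟩
  have ht₁mem : t₁ ∈ Icc (0:ℝ) 1 := ⟨ha.1.trans ht₁.1, ht₁.2⟩
  have hat₁ : snakeMinOn ζ a t₁ = M := by
    refine le_antisymm ?_ ?_
    · rw [← hζt₁]; exact snakeMinOn_le hζ ha ht₁mem right_mem_uIcc
    · exact le_minOn fun v hv => hge v (by rwa [uIcc_of_le ht₁.1] at hv)
  have hsplit : snakeMinOn ζ t₁ θ = M := by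
    rw [snakeMinOn_comm, snakeMinOn_split hζ hθ ha ht₁mem hθa ht₁.1, snakeMinOn_comm (x := θ) (y := a),
      ← hM, hat₁, min_self]
  have := hmin t₁ ht₁
  unfold dd at this
  rw [hζt₁, hsplit, ← hM] at this
  linarith

lemma key1 (hζ : ContinuousOn ζ (Icc 0 1)) (hθ : θ ∈ Icc (0:ℝ) 1) (ha : a ∈ Icc (0:ℝ) 1)
    (hb : b ∈ Icc (0:ℝ) 1) (hθa : θ ≤ a) (hab : a ≤ b)
    (heq : dd ζ θ a = dd ζ θ b) (hmin : ∀ t ∈ Icc a b, dd ζ θ a ≤ dd ζ θ t) :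
    ζ a = ζ b ∧ snakeMinOn ζ a b = ζ a := by
  set M := snakeMinOn ζ a θ with hM
  set m := snakeMinOn ζ a b with hm
  have hMa : M ≤ ζ a := snakeMinOn_le hζ ha hθ left_mem_uIcc
  have hmb : m ≤ ζ b := snakeMinOn_le hζ ha hb right_mem_uIcc
  have hma : m ≤ ζ a := snakeMinOn_le hζ ha hb left_mem_uIcc
  have hsplit_b : snakeMinOn ζ b θ = min M m := by
    rw [snakeMinOn_comm, snakeMinOn_split hζ hθ ha hb hθa hab, snakeMinOn_comm (x := θ) (y := a), ← hM, ← hm]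
  obtain ⟨cc, hcc, hζcc, _⟩ := snakeMinOn_attained hζ ha hb
  have hcc' : cc ∈ Icc a b := by rwa [uIcc_of_le hab] at hcc
  have hccmem : cc ∈ Icc (0:ℝ) 1 := ⟨ha.1.trans hcc'.1, hcc'.2.trans hb.2⟩
  rcases le_or_gt M m with hMm | hmM
  · have hmc : m ≤ snakeMinOn ζ a cc := snakeMinOn_subset hζ ha hb
      (by rw [uIcc_of_le hab, uIcc_of_le hcc'.1]; exact Icc_subset_Icc le_rfl hcc'.2)
    have hsplit_c : snakeMinOn ζ cc θ = M := by
      rw [snakeMinOn_comm, snakeMinOn_split hζ hθ ha hccmem hθa hcc'.1, snakeMinOn_comm (x := θ) (y := a),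
        ← hM, min_eq_left (hMm.trans hmc)]
    have h1 := hmin cc hcc'
    unfold dd at h1 heq
    rw [hζcc, hsplit_c, ← hM, ← hm] at h1
    rw [hsplit_b, min_eq_left hMm, ← hM] at heq
    constructor
    · linarith
    · linarith
  · obtain ⟨t₁, ht₁, hζt₁, hge⟩ := hit hζ ha hb hab hMa ⟨cc, hcc', by rw [hζcc, ← hm]; linarith⟩
    have ht₁mem : t₁ ∈ Icc (0:ℝ) 1 := ⟨ha.1.trans ht₁.1, ht₁.2.trans hb.2⟩
    have hat₁ : snakeMinOn ζ a t₁ = M := by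
      refine le_antisymm ?_ ?_
      · rw [← hζt₁]; exact snakeMinOn_le hζ ha ht₁mem right_mem_uIcc
      · exact le_minOn fun v hv => hge v (by rwa [uIcc_of_le ht₁.1] at hv)
    have hsplit_t : snakeMinOn ζ t₁ θ = M := by
      rw [snakeMinOn_comm, snakeMinOn_split hζ hθ ha ht₁mem hθa ht₁.1, snakeMinOn_comm (x := θ) (y := a),
        ← hM, hat₁, min_self]
    have h1 := hmin t₁ ⟨ht₁.1, ht₁.2⟩
    unfold dd at h1 heq
    rw [hζt₁, hsplit_t, ← hM] at h1
    rw [hsplit_b, min_eq_right hmM.le, ← hM] at heq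
    exfalso
    linarith

end core

section refl
variable {ζ : ℝ → ℝ} {θ a b t : ℝ}

lemma refl_continuousOn (hζ : ContinuousOn ζ (Icc 0 1)) :
    ContinuousOn (fun t => ζ (1 - t)) (Icc (0:ℝ) 1) := by
  apply hζ.comp ((continuous_const.sub continuous_id).continuousOn)
  intro t ht
  simp only [id_eq, mem_Icc, Pi.sub_apply]
  exact ⟨by linarith [ht.2], by linarith [ht.1]⟩

lemma dd_reflect : dd (fun u => ζ (1 - u)) (1 - θ) (1 - t) = dd ζ θ t := by
  unfold dd
  rw [snakeMinOn_reflect]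
  simp only [sub_sub_cancel]

lemma key1' (hζ : ContinuousOn ζ (Icc 0 1)) (hθ : θ ∈ Icc (0:ℝ) 1) (ha : a ∈ Icc (0:ℝ) 1)
    (hb : b ∈ Icc (0:ℝ) 1) (hab : a ≤ b) (hbθ : b ≤ θ)
    (heq : dd ζ θ a = dd ζ θ b) (hmin : ∀ t ∈ Icc a b, dd ζ θ b ≤ dd ζ θ t) :
    ζ a = ζ b ∧ snakeMinOn ζ a b = ζ b := by
  have h := key1 (ζ := fun u => ζ (1 - u)) (θ := 1 - θ) (a := 1 - b) (b := 1 - a)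
    (refl_continuousOn hζ) ⟨by linarith [hθ.2], by linarith [hθ.1]⟩
    ⟨by linarith [hb.2], by linarith [hb.1]⟩ ⟨by linarith [ha.2], by linarith [ha.1]⟩
    (by linarith) (by linarith)
    (by rw [dd_reflect, dd_reflect]; exact heq.symm)
    (by
      intro t ht
      have h1 : t = 1 - (1 - t) := by ring
      rw [h1, dd_reflect, dd_reflect]
      exact hmin (1 - t) ⟨by linarith [ht.2], by linarith [ht.1]⟩)
  obtain ⟨h1, h2⟩ := h
  simp only [sub_sub_cancel] at h1
  rw [snakeMinOn_reflect] at h2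
  simp only [sub_sub_cancel] at h2
  rw [snakeMinOn_comm] at h2
  exact ⟨h1.symm, h2⟩

lemma key2' (hζ : ContinuousOn ζ (Icc 0 1)) (h0 : ∀ u ∈ Icc (0:ℝ) 1, 0 ≤ ζ u)
    (h00 : ζ 0 = 0) (hθ : θ ∈ Icc (0:ℝ) 1) (hb : b ∈ Icc (0:ℝ) 1) (hbθ : b ≤ θ)
    (hmin : ∀ t ∈ Icc 0 b, dd ζ θ b ≤ dd ζ θ t) :
    ζ b = snakeMinOn ζ b θ := by
  have h := key2 (ζ := fun u => ζ (1 - u)) (θ := 1 - θ) (a := 1 - b)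
    (refl_continuousOn hζ)
    (fun u hu => h0 (1 - u) ⟨by linarith [hu.2], by linarith [hu.1]⟩)
    (by simpa using h00)
    ⟨by linarith [hθ.2], by linarith [hθ.1]⟩
    ⟨by linarith [hb.2], by linarith [hb.1]⟩ (by linarith)
    (by
      intro t ht
      have h1 : t = 1 - (1 - t) := by ring
      rw [h1, dd_reflect, dd_reflect]
      exact hmin (1 - t) ⟨by linarith [ht.2], by linarith [ht.1]⟩)
  rw [snakeMinOn_reflect] at h
  simpa only [sub_sub_cancel] using h

end refl

section cont
variable {ζ : ℝ → ℝ} {θ x x' u ε : ℝ}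

lemma mem_uIcc_between (h1 : u ∈ uIcc x' θ) (h2 : u ∉ uIcc x θ) : u ∈ uIcc x x' := by
  simp only [Set.mem_uIcc] at *
  push_neg at h2
  rcases h1 with ⟨h1a, h1b⟩ | ⟨h1a, h1b⟩
  · right
    have : ¬ x ≤ u := fun hc => absurd h1b (not_le.2 (h2.1 hc))
    exact ⟨h1a, (not_le.1 this).le⟩
  · left
    exact ⟨(h2.2 h1a).le, h1b⟩

lemma abs_sub_le_of_uIcc (h : u ∈ uIcc x x') : |u - x| ≤ |x' - x| := by
  have h1 := le_abs_self (x' - x)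
  have h2 := neg_abs_le (x' - x)
  rw [abs_le]
  rcases Set.mem_uIcc.1 h with ⟨ha, hb⟩ | ⟨ha, hb⟩ <;> constructor <;> linarith

lemma snakeMinOn_approx (hζ : ContinuousOn ζ (Icc 0 1)) (hθ : θ ∈ Icc (0:ℝ) 1)
    (hx : x ∈ Icc (0:ℝ) 1) (hx' : x' ∈ Icc (0:ℝ) 1) (hε : 0 < ε)
    (hcomp : ∀ u ∈ Icc (0:ℝ) 1, |u - x| ≤ |x' - x| → ζ x - ζ u < ε) :
    snakeMinOn ζ x θ < snakeMinOn ζ x' θ + ε := by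
  obtain ⟨u, hu, hζu, _⟩ := snakeMinOn_attained hζ hx' hθ
  by_cases hmem : u ∈ uIcc x θ
  · have := snakeMinOn_le hζ hx hθ hmem
    linarith
  · have huxx' : u ∈ uIcc x x' := mem_uIcc_between hu hmem
    have hd : |u - x| ≤ |x' - x| := abs_sub_le_of_uIcc huxx'
    have hu01 : u ∈ Icc (0:ℝ) 1 := uIcc_subset_unit hx' hθ hu
    have h1 := hcomp u hu01 hd
    have h2 : snakeMinOn ζ x θ ≤ ζ x := snakeMinOn_le hζ hx hθ left_mem_uIcc
    linarith

lemma continuousOn_minOn (hζ : ContinuousOn ζ (Icc 0 1)) (hθ : θ ∈ Icc (0:ℝ) 1) :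
    ContinuousOn (fun x => snakeMinOn ζ x θ) (Icc (0:ℝ) 1) := by
  have hUC : UniformContinuousOn ζ (Icc 0 1) :=
    isCompact_Icc.uniformContinuousOn_of_continuous hζ
  rw [Metric.continuousOn_iff]
  intro x hx ε hε
  obtain ⟨δ, hδ, hδ'⟩ := Metric.uniformContinuousOn_iff.mp hUC ε hε
  refine ⟨δ, hδ, fun x' hx' hdist => ?_⟩
  rw [Real.dist_eq, abs_lt]
  rw [Real.dist_eq] at hdist
  have habs : |x - x'| < δ := by rwa [abs_sub_comm]
  constructor
  · -- -ε < snakeMinOn x' θ - snakeMinOn x θ  ⟸  snakeMinOn x θ < snakeMinOn x' θ + ε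
    have := snakeMinOn_approx hζ hθ hx hx' hε (fun u hu hd => by
      have hda : dist (ζ x) (ζ u) < ε := hδ' x hx u hu (by
        rw [Real.dist_eq, abs_sub_comm]
        exact lt_of_le_of_lt hd hdist)
      rw [Real.dist_eq] at hda
      calc ζ x - ζ u ≤ |ζ x - ζ u| := le_abs_self _
        _ < ε := hda)
    linarith
  · -- snakeMinOn x' θ - snakeMinOn x θ < ε  ⟸  snakeMinOn x' θ < snakeMinOn x θ + ε
    have := snakeMinOn_approx hζ hθ hx' hx hε (fun u hu hd => by
      have hda : dist (ζ x') (ζ u) < ε := hδ' x' hx' u hu (by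
        rw [Real.dist_eq, abs_sub_comm]
        exact lt_of_le_of_lt hd habs)
      rw [Real.dist_eq] at hda
      calc ζ x' - ζ u ≤ |ζ x' - ζ u| := le_abs_self _
        _ < ε := hda)
    linarith

end cont


section wrapfacts
variable {ζ : ℝ → ℝ} {θ a x : ℝ}

lemma wrap_lt (h : a < 1) : wrap a = a := if_pos h

lemma wrap_ge (h : 1 ≤ a) : wrap a = a - 1 := if_neg (not_lt.2 h)

lemma wrap_mem (hθ : θ ∈ Ico (0:ℝ) 1) (hx : x ∈ Icc (0:ℝ) 1) :
    wrap (θ + x) ∈ Icc (0:ℝ) 1 := by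
  by_cases h : θ + x < 1
  · rw [wrap_lt h]
    exact ⟨by linarith [hθ.1, hx.1], h.le⟩
  · push_neg at h
    rw [wrap_ge h]
    exact ⟨by linarith, by linarith [hθ.2, hx.2]⟩

lemma snakeMinOn_zero (hζ : ContinuousOn ζ (Icc 0 1)) (h0 : ∀ u ∈ Icc (0:ℝ) 1, 0 ≤ ζ u)
    (hz : ζ 0 = 0) (hθ : θ ∈ Icc (0:ℝ) 1) : snakeMinOn ζ 0 θ = 0 := by
  refine le_antisymm ?_ (snakeMinOn_nonneg h0 (by norm_num) hθ)
  calc snakeMinOn ζ 0 θ ≤ ζ 0 := snakeMinOn_le hζ (by norm_num) hθ left_mem_uIcc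
    _ = 0 := hz

lemma snakeMinOn_one (hζ : ContinuousOn ζ (Icc 0 1)) (h0 : ∀ u ∈ Icc (0:ℝ) 1, 0 ≤ ζ u)
    (hz : ζ 1 = 0) (hθ : θ ∈ Icc (0:ℝ) 1) : snakeMinOn ζ 1 θ = 0 := by
  refine le_antisymm ?_ (snakeMinOn_nonneg h0 (by norm_num) hθ)
  calc snakeMinOn ζ 1 θ ≤ ζ 1 := snakeMinOn_le hζ (by norm_num) hθ left_mem_uIcc
    _ = 0 := hz

lemma glue {F : ℝ → ℝ} {c : ℝ} (hc : c ∈ Icc (0:ℝ) 1) (h1 : ContinuousOn F (Icc 0 c))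
    (h2 : ContinuousOn F (Icc c 1)) : ContinuousOn F (Icc 0 1) := by
  intro x hx
  have he : Icc (0:ℝ) 1 = Icc 0 c ∪ Icc c 1 := (Icc_union_Icc_eq_Icc hc.1 hc.2).symm
  rw [he]
  apply ContinuousWithinAt.union
  · by_cases hmem : x ∈ Icc (0:ℝ) c
    · exact h1 x hmem
    · exact continuousWithinAt_of_notMem_closure (by rwa [isClosed_Icc.closure_eq])
  · by_cases hmem : x ∈ Icc c (1:ℝ)
    · exact h2 x hmem
    · exact continuousWithinAt_of_notMem_closure (by rwa [isClosed_Icc.closure_eq])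

end wrapfacts

/-- The rerooting operator `J^(θ)` maps `𝕋` to `𝕋`: if `(f,ζ) ∈ 𝕋` and `θ ∈ [0,1)`, then
`(f^[θ], ζ^(θ)) ∈ 𝕋`. -/
theorem reroot_mem_snakeSpace (f ζ : ℝ → ℝ) (θ : ℝ)
    (hθ : θ ∈ Set.Ico (0:ℝ) 1) (h : MemSnakeSpace f ζ) :
    MemSnakeSpace (rerootF f θ) (rerootZ ζ θ) := by
  obtain ⟨hf, hζc, hζ0, hζ1, hζpos, hf0, hf1, hsnake⟩ := h
  have hθ01 : θ ∈ Icc (0:ℝ) 1 := ⟨hθ.1, hθ.2.le⟩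
  have h1θ : 1 - θ ∈ Icc (0:ℝ) 1 := ⟨by linarith [hθ.2], by linarith [hθ.1]⟩
  -- continuity of rerootF
  have maps1 : MapsTo (fun x => θ + x) (Icc 0 (1 - θ)) (Icc (0:ℝ) 1) := by
    intro x hx
    simp only [mem_Icc] at hx ⊢
    exact ⟨by linarith [hθ.1, hx.1], by linarith [hx.2]⟩
  have maps2 : MapsTo (fun x => θ + x - 1) (Icc (1 - θ) 1) (Icc (0:ℝ) 1) := by
    intro x hx
    simp only [mem_Icc] at hx ⊢
    exact ⟨by linarith [hx.1], by linarith [hx.2, hθ.2]⟩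
  have cadd1 : ContinuousOn (fun x : ℝ => θ + x) (Icc 0 (1 - θ)) :=
    (continuous_const.add continuous_id).continuousOn
  have cadd2 : ContinuousOn (fun x : ℝ => θ + x - 1) (Icc (1 - θ) 1) :=
    ((continuous_const.add continuous_id).sub continuous_const).continuousOn
  have contF : ContinuousOn (rerootF f θ) (Icc 0 1) := by
    apply glue h1θ
    · apply ContinuousOn.congr (f := fun x => f (θ + x) - f θ)
        ((hf.comp cadd1 maps1).sub continuousOn_const)
      intro x hx
      rcases lt_or_eq_of_le hx.2 with hlt | heq
      · show f (wrap (θ + x)) - f θ = _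
        rw [wrap_lt (by linarith)]
      · rw [heq]
        show f (wrap (θ + (1 - θ))) - f θ = f (θ + (1 - θ)) - f θ
        rw [show θ + (1 - θ) = 1 by ring, wrap_ge le_rfl,
          show (1:ℝ) - 1 = 0 by norm_num, hf0, hf1]
    · apply ContinuousOn.congr (f := fun x => f (θ + x - 1) - f θ)
        ((hf.comp cadd2 maps2).sub continuousOn_const)
      intro x hx
      show f (wrap (θ + x)) - f θ = _
      rw [wrap_ge (by linarith [hx.1])]
  have contZ : ContinuousOn (rerootZ ζ θ) (Icc 0 1) := by
    have cmin := continuousOn_minOn hζc hθ01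
    apply glue h1θ
    · apply ContinuousOn.congr
        (f := fun x => ζ (θ + x) + ζ θ - 2 * snakeMinOn ζ (θ + x) θ)
        (((hζc.comp cadd1 maps1).add continuousOn_const).sub
          (continuousOn_const.mul (cmin.comp cadd1 maps1)))
      intro x hx
      rcases lt_or_eq_of_le hx.2 with hlt | heq
      · show ζ (wrap (θ + x)) + ζ θ - 2 * snakeMinOn ζ (wrap (θ + x)) θ = _
        rw [wrap_lt (by linarith)]
      · rw [heq]
        show ζ (wrap (θ + (1 - θ))) + ζ θ - 2 * snakeMinOn ζ (wrap (θ + (1 - θ))) θ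
            = ζ (θ + (1 - θ)) + ζ θ - 2 * snakeMinOn ζ (θ + (1 - θ)) θ
        rw [show θ + (1 - θ) = 1 by ring, wrap_ge le_rfl,
          show (1:ℝ) - 1 = 0 by norm_num, hζ0, hζ1,
          snakeMinOn_zero hζc hζpos hζ0 hθ01, snakeMinOn_one hζc hζpos hζ1 hθ01]
    · apply ContinuousOn.congr
        (f := fun x => ζ (θ + x - 1) + ζ θ - 2 * snakeMinOn ζ (θ + x - 1) θ)
        (((hζc.comp cadd2 maps2).add continuousOn_const).sub
          (continuousOn_const.mul (cmin.comp cadd2 maps2)))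
      intro x hx
      show ζ (wrap (θ + x)) + ζ θ - 2 * snakeMinOn ζ (wrap (θ + x)) θ = _
      rw [wrap_ge (by linarith [hx.1])]
  -- the snake property
  have main : ∀ s s', s ∈ Icc (0:ℝ) 1 → s' ∈ Icc (0:ℝ) 1 → s ≤ s' →
      rerootZ ζ θ s = rerootZ ζ θ s' →
      (∀ y ∈ Icc s s', rerootZ ζ θ s ≤ rerootZ ζ θ y) →
      rerootF f θ s = rerootF f θ s' := by
    intro s s' hs hs' hss heq hmin
    rcases lt_or_ge (θ + s') 1 with hcase1 | hge'
    · -- no wrap on [s,s']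
      have hwa : wrap (θ + s) = θ + s := wrap_lt (by linarith)
      have hwb : wrap (θ + s') = θ + s' := wrap_lt hcase1
      have ha : θ + s ∈ Icc (0:ℝ) 1 := ⟨by linarith [hθ.1, hs.1], by linarith⟩
      have hb : θ + s' ∈ Icc (0:ℝ) 1 := ⟨by linarith [hθ.1, hs'.1], hcase1.le⟩
      have heq' : dd ζ θ (θ + s) = dd ζ θ (θ + s') := by
        unfold rerootZ at heq
        rw [hwa, hwb] at heq
        exact heq
      have hmin' : ∀ t ∈ Icc (θ + s) (θ + s'), dd ζ θ (θ + s) ≤ dd ζ θ t := by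
        intro t ht
        have hy := hmin (t - θ) ⟨by linarith [ht.1], by linarith [ht.2]⟩
        unfold rerootZ at hy
        rw [show θ + (t - θ) = t by ring, wrap_lt (by linarith [ht.2] : t < 1), hwa] at hy
        exact hy
      obtain ⟨he, hm⟩ := key1 hζc hθ01 ha hb (by linarith [hs.1]) (by linarith) heq' hmin'
      have hfab := hsnake (θ + s) ha (θ + s') hb he hm.symm
      unfold rerootF
      rw [hwa, hwb, hfab]
    · rcases le_or_gt 1 (θ + s) with hge | hlt
      · -- both wrapped
        have hwa : wrap (θ + s) = θ + s - 1 := wrap_ge hge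
        have hwb : wrap (θ + s') = θ + s' - 1 := wrap_ge (by linarith)
        have ha : θ + s - 1 ∈ Icc (0:ℝ) 1 := ⟨by linarith, by linarith [hθ.2, hs.2]⟩
        have hb : θ + s' - 1 ∈ Icc (0:ℝ) 1 := ⟨by linarith, by linarith [hθ.2, hs'.2]⟩
        have heq' : dd ζ θ (θ + s - 1) = dd ζ θ (θ + s' - 1) := by
          unfold rerootZ at heq
          rw [hwa, hwb] at heq
          exact heq
        have hmin' : ∀ t ∈ Icc (θ + s - 1) (θ + s' - 1),
            dd ζ θ (θ + s' - 1) ≤ dd ζ θ t := by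
          intro t ht
          rw [← heq']
          have hy := hmin (t + 1 - θ) ⟨by linarith [ht.1], by linarith [ht.2]⟩
          unfold rerootZ at hy
          rw [show θ + (t + 1 - θ) = t + 1 by ring,
            wrap_ge (by linarith [ht.1, ha.1] : (1:ℝ) ≤ t + 1),
            show t + 1 - 1 = t by ring, hwa] at hy
          exact hy
        obtain ⟨he, hm⟩ := key1' hζc hθ01 ha hb (by linarith) (by linarith [hs'.2])
          heq' hmin'
        have hfab := hsnake (θ + s - 1) ha (θ + s' - 1) hb he (by rw [hm, he])
        unfold rerootF
        rw [hwa, hwb, hfab]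
      · -- wrap point inside (s, s']
        have hwa : wrap (θ + s) = θ + s := wrap_lt hlt
        have hwb : wrap (θ + s') = θ + s' - 1 := wrap_ge hge'
        have ha : θ + s ∈ Icc (0:ℝ) 1 := ⟨by linarith [hθ.1, hs.1], hlt.le⟩
        have hb : θ + s' - 1 ∈ Icc (0:ℝ) 1 := ⟨by linarith, by linarith [hθ.2, hs'.2]⟩
        have heq' : dd ζ θ (θ + s) = dd ζ θ (θ + s' - 1) := by
          unfold rerootZ at heq
          rw [hwa, hwb] at heq
          exact heq
        have hmin2 : ∀ t ∈ Icc (θ + s) 1, dd ζ θ (θ + s) ≤ dd ζ θ t := by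
          intro t ht
          rcases lt_or_eq_of_le ht.2 with hlt2 | heq2
          · have hy := hmin (t - θ) ⟨by linarith [ht.1], by linarith [hge']⟩
            unfold rerootZ at hy
            rw [show θ + (t - θ) = t by ring, wrap_lt hlt2, hwa] at hy
            exact hy
          · subst heq2
            have hy := hmin (1 - θ) ⟨by linarith, by linarith [hge']⟩
            unfold rerootZ at hy
            rw [show θ + (1 - θ) = 1 by ring, wrap_ge le_rfl,
              show (1:ℝ) - 1 = 0 by norm_num, hwa, hζ0,
              snakeMinOn_zero hζc hζpos hζ0 hθ01] at hy
            show dd ζ θ (θ + s) ≤ ζ 1 + ζ θ - 2 * snakeMinOn ζ 1 θ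
            rw [hζ1, snakeMinOn_one hζc hζpos hζ1 hθ01]
            exact le_trans hy (by norm_num)
        have hA : ζ (θ + s) = snakeMinOn ζ (θ + s) θ :=
          key2 hζc hζpos hζ1 hθ01 ha (by linarith [hs.1]) hmin2
        have hmin3 : ∀ t ∈ Icc 0 (θ + s' - 1), dd ζ θ (θ + s' - 1) ≤ dd ζ θ t := by
          intro t ht
          rw [← heq']
          have hy := hmin (t + 1 - θ) ⟨by linarith [ht.1], by linarith [ht.2]⟩
          unfold rerootZ at hy
          rw [show θ + (t + 1 - θ) = t + 1 by ring,
            wrap_ge (by linarith [ht.1] : (1:ℝ) ≤ t + 1),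
            show t + 1 - 1 = t by ring, hwa] at hy
          exact hy
        have hB : ζ (θ + s' - 1) = snakeMinOn ζ (θ + s' - 1) θ :=
          key2' hζc hζpos hζ0 hθ01 hb (by linarith [hs'.2]) hmin3
        have hab : ζ (θ + s) = ζ (θ + s' - 1) := by
          unfold dd at heq'
          rw [← hA, ← hB] at heq'
          linarith
        have hminab : snakeMinOn ζ (θ + s) (θ + s' - 1) = ζ (θ + s) := by
          rw [snakeMinOn_comm, snakeMinOn_split hζc hb hθ01 ha (by linarith [hs'.2]) (by linarith [hs.1]),
            ← hB, snakeMinOn_comm (x := θ) (y := θ + s), ← hA, ← hab, min_self]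
        have hfab := hsnake (θ + s) ha (θ + s' - 1) hb hab hminab.symm
        unfold rerootF
        rw [hwa, hwb, hfab]
  refine ⟨contF, contZ, ?_, ?_, ?_, ?_, ?_, ?_⟩
  · show ζ (wrap (θ + 0)) + ζ θ - 2 * snakeMinOn ζ (wrap (θ + 0)) θ = 0
    rw [add_zero, wrap_lt hθ.2, snakeMinOn_self]
    ring
  · show ζ (wrap (θ + 1)) + ζ θ - 2 * snakeMinOn ζ (wrap (θ + 1)) θ = 0
    rw [wrap_ge (by linarith [hθ.1]), show θ + 1 - 1 = θ by ring, snakeMinOn_self]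
    ring
  · intro x hx
    have hw := wrap_mem hθ hx
    have h1 := snakeMinOn_le hζc hw hθ01 left_mem_uIcc
    have h2 := snakeMinOn_le hζc hw hθ01 right_mem_uIcc
    show 0 ≤ ζ (wrap (θ + x)) + ζ θ - 2 * snakeMinOn ζ (wrap (θ + x)) θ
    linarith
  · show f (wrap (θ + 0)) - f θ = 0
    rw [add_zero, wrap_lt hθ.2, sub_self]
  · show f (wrap (θ + 1)) - f θ = 0
    rw [wrap_ge (by linarith [hθ.1]), show θ + 1 - 1 = θ by ring, sub_self]
  · intro s hs s' hs' heq hmin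
    have hpt : ∀ y ∈ uIcc s s', rerootZ ζ θ s ≤ rerootZ ζ θ y := by
      intro y hy
      rw [hmin]
      exact snakeMinOn_le contZ hs hs' hy
    rcases le_total s s' with hss | hss
    · refine main s s' hs hs' hss heq ?_
      intro y hy
      exact hpt y (by rwa [uIcc_of_le hss])
    · refine (main s' s hs' hs hss heq.symm ?_).symm
      intro y hy
      rw [← heq]
      exact hpt y (by rw [uIcc_comm]; rwa [uIcc_of_le hss])
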